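/- Let k ∈ ℕ, let ζ_0, …, ζ_k be nonnegative real numbers with ∑_{t=0}^{k} ζ_t = 1, let ŷ_0, …, ŷ_k ∈ E and u_0, …, u_k ∈ F, and set z := ∑_{t=0}^{k} ζ_t·ŷ_t and y := ∑_{t=0}^{k} ζ_t·u_t. Then ‖y − g(z)‖ ≤ (L/2)·∑_{t=0}^{k} ζ_t·‖z − ŷ_t‖² + ‖∑_{t=0}^{k} ζ_t·(u_t − g(ŷ_t))‖. -/

import Mathlib

open Finset

lemma taylor_quad_bound {E F : Type*} [NormedAddCommGroup E] [NormedSpace ℝ E]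
    [NormedAddCommGroup F] [NormedSpace ℝ F]
    (g : E → F) (g' : E → E →L[ℝ] F) (L : ℝ) (hL : 0 ≤ L)
    (hg : ∀ u, HasFDerivAt g (g' u) u)
    (hg' : ∀ u v, ‖g' u - g' v‖ ≤ L * ‖u - v‖) (a b : E) :
    ‖g b - g a - g' a (b - a)‖ ≤ L / 2 * ‖b - a‖ ^ 2 := by
  set v := b - a with hv
  set f : ℝ → F := fun t => g (a + t • v) - t • g' a v with hf
  have hline : ∀ t : ℝ, HasDerivAt (fun t : ℝ => a + t • v) v t := by
    intro t
    simpa using ((hasDerivAt_id t).smul_const v).const_add a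
  have hderiv : ∀ t : ℝ, HasDerivAt f (g' (a + t • v) v - g' a v) t := by
    intro t
    have h1 : HasDerivAt (fun t : ℝ => g (a + t • v)) (g' (a + t • v) v) t := by
      exact (hg (a + t • v)).comp_hasDerivAt t (hline t)
    have h2 : HasDerivAt (fun t : ℝ => t • g' a v) (g' a v) t := by
      simpa using (hasDerivAt_id t).smul_const (g' a v)
    exact h1.sub h2
  have key : ∀ x ∈ Set.Icc (0:ℝ) 1, ‖f x - f 0‖ ≤ L * ‖v‖ ^ 2 * (x ^ 2 / 2) := by
    have hcont : ContinuousOn (fun x => f x - f 0) (Set.Icc (0:ℝ) 1) := by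
      have : Continuous f := by
        have : Differentiable ℝ f := fun t => (hderiv t).differentiableAt
        exact this.continuous
      exact (this.sub continuous_const).continuousOn
    have hB : ∀ x : ℝ, HasDerivAt (fun x : ℝ => L * ‖v‖ ^ 2 * (x ^ 2 / 2)) (L * ‖v‖ ^ 2 * x) x := by
      intro x
      have := ((hasDerivAt_pow 2 x).div_const 2).const_mul (L * ‖v‖ ^ 2)
      simpa using this.congr_deriv (by push_cast; ring)
    refine image_norm_le_of_norm_deriv_right_le_deriv_boundary hcont
      (fun x _ => ((hderiv x).sub_const (f 0)).hasDerivWithinAt) (by simp) hB ?_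
    intro x hx
    have hx0 : 0 ≤ x := hx.1
    calc ‖(g' (a + x • v)) v - (g' a) v‖ = ‖(g' (a + x • v) - g' a) v‖ := by simp
      _ ≤ ‖g' (a + x • v) - g' a‖ * ‖v‖ := (g' (a + x • v) - g' a).le_opNorm v
      _ ≤ L * ‖a + x • v - a‖ * ‖v‖ :=
          mul_le_mul_of_nonneg_right (hg' _ _) (norm_nonneg v)
      _ = L * ‖v‖ ^ 2 * x := by
          simp [norm_smul, abs_of_nonneg hx0]; ring
  have h1 := key 1 (by norm_num)
  have hf0 : f 0 = g a := by simp [hf]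
  have hf1 : f 1 = g b - g' a v := by simp [hf, hv]
  rw [hf0, hf1] at h1
  calc ‖g b - g a - g' a (b - a)‖ = ‖g b - g' a v - g a‖ := by rw [hv]; congr 1; abel
    _ ≤ L * ‖v‖ ^ 2 * (1 ^ 2 / 2) := h1
    _ = L / 2 * ‖b - a‖ ^ 2 := by rw [hv]; ring

theorem stmt_7 {E F : Type*} [NormedAddCommGroup E] [NormedSpace ℝ E]
    [NormedAddCommGroup F] [NormedSpace ℝ F]
    (g : E → F) (g' : E → E →L[ℝ] F) (L : ℝ) (hL : 0 ≤ L)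
    (hg : ∀ u, HasFDerivAt g (g' u) u)
    (hg' : ∀ u v, ‖g' u - g' v‖ ≤ L * ‖u - v‖)
    (k : ℕ) (ζ : ℕ → ℝ) (hζ : ∀ t ∈ Finset.range (k + 1), 0 ≤ ζ t)
    (hζsum : ∑ t ∈ Finset.range (k + 1), ζ t = 1)
    (yhat : ℕ → E) (u : ℕ → F) :
    ‖(∑ t ∈ Finset.range (k + 1), ζ t • u t)
        - g (∑ t ∈ Finset.range (k + 1), ζ t • yhat t)‖ ≤
      (L / 2) * ∑ t ∈ Finset.range (k + 1),
          ζ t * ‖(∑ s ∈ Finset.range (k + 1), ζ s • yhat s) - yhat t‖ ^ 2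
        + ‖∑ t ∈ Finset.range (k + 1), ζ t • (u t - g (yhat t))‖ := by
  set z := ∑ s ∈ Finset.range (k + 1), ζ s • yhat s with hz
  have hzero : ∑ t ∈ Finset.range (k + 1), ζ t • (g' z) (yhat t - z) = 0 := by
    have : ∑ t ∈ Finset.range (k + 1), ζ t • (g' z) (yhat t - z)
        = (g' z) (∑ t ∈ Finset.range (k + 1), ζ t • (yhat t - z)) := by
      rw [map_sum]
      simp [map_smul]
    rw [this]
    have : ∑ t ∈ Finset.range (k + 1), ζ t • (yhat t - z) = 0 := by
      simp only [smul_sub, Finset.sum_sub_distrib, ← hz, ← Finset.sum_smul, hζsum, one_smul,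
        sub_self]
    rw [this, map_zero]
  have hdecomp : (∑ t ∈ Finset.range (k + 1), ζ t • u t) - g z
      = (∑ t ∈ Finset.range (k + 1), ζ t • (g (yhat t) - g z - (g' z) (yhat t - z)))
        + ∑ t ∈ Finset.range (k + 1), ζ t • (u t - g (yhat t)) := by
    have h1 : ∑ t ∈ Finset.range (k + 1), ζ t • g z = g z := by
      rw [← Finset.sum_smul, hζsum, one_smul]
    simp only [smul_sub, Finset.sum_sub_distrib]
    rw [hzero, h1]
    abel
  rw [hdecomp]
  refine (norm_add_le _ _).trans (add_le_add_left ?_ _)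
  calc ‖∑ t ∈ Finset.range (k + 1), ζ t • (g (yhat t) - g z - (g' z) (yhat t - z))‖
      ≤ ∑ t ∈ Finset.range (k + 1), ‖ζ t • (g (yhat t) - g z - (g' z) (yhat t - z))‖ :=
        norm_sum_le _ _
    _ ≤ ∑ t ∈ Finset.range (k + 1), ζ t * (L / 2 * ‖z - yhat t‖ ^ 2) := by
        refine Finset.sum_le_sum fun t ht => ?_
        rw [norm_smul, Real.norm_eq_abs, abs_of_nonneg (hζ t ht)]
        refine mul_le_mul_of_nonneg_left ?_ (hζ t ht)
        have := taylor_quad_bound g g' L hL hg hg' z (yhat t)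
        rwa [norm_sub_rev z (yhat t)]
    _ = (L / 2) * ∑ t ∈ Finset.range (k + 1), ζ t * ‖z - yhat t‖ ^ 2 := by
        rw [Finset.mul_sum]; congr 1; ext t; ring
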